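/- A graded ideal p of a Z/2-graded noetherian algebra R is graded-primitive if and only if there exists a (left) primitive ideal P of R with p = P ∩ σ(P). -/

import Mathlib

section Aux
variable {R : Type} [Ring R]

def Twisted (_σ : R →+* R) (L : Type) : Type := L

def untw (σ : R →+* R) {L : Type} (x : Twisted σ L) : L := x

def totw (σ : R →+* R) {L : Type} (x : L) : Twisted σ L := x

instance {σ : R →+* R} {L : Type} [AddCommGroup L] : AddCommGroup (Twisted σ L) :=
  inferInstanceAs (AddCommGroup L)

theorem untw_add {σ : R →+* R} {L : Type} [AddCommGroup L] (x y : Twisted σ L) :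
    untw σ (x + y) = untw σ x + untw σ y := rfl

instance {σ : R →+* R} {L : Type} [AddCommGroup L] [Module R L] :
    Module R (Twisted σ L) where
  smul r x := totw σ (σ r • untw σ x)
  one_smul x := show totw σ (σ 1 • untw σ x) = x by
    rw [map_one, one_smul]; rfl
  mul_smul a b x := show totw σ (σ (a*b) • untw σ x)
      = totw σ (σ a • untw σ (totw σ (σ b • untw σ x))) by
    rw [map_mul, mul_smul]; rfl
  smul_zero a := show totw σ (σ a • (0 : L)) = 0 by rw [smul_zero]; rfl
  smul_add a x y := show totw σ (σ a • untw σ (x + y))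
      = totw σ (σ a • untw σ x) + totw σ (σ a • untw σ y) by
    rw [untw_add, smul_add]; rfl
  add_smul a b x := show totw σ (σ (a+b) • untw σ x)
      = totw σ (σ a • untw σ x) + totw σ (σ b • untw σ x) by
    rw [map_add, add_smul]; rfl
  zero_smul x := show totw σ (σ 0 • untw σ x) = 0 by rw [map_zero, zero_smul]; rfl

theorem twisted_smul {σ : R →+* R} {L : Type} [AddCommGroup L] [Module R L]
    (r : R) (x : Twisted σ L) : untw σ (r • x) = σ r • untw σ x := rfl

variable {k : Type} [Field k] [Algebra k R]
variable {M : Type} [AddCommGroup M] [Module R M]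

/-- Image of a submodule under the parity automorphism of a graded module. -/
def mapSub (σ : R ≃ₐ[k] R) (σM : M ≃+ M)
    (hc : ∀ (r : R) (x : M), σM (r • x) = σ r • σM x) (hσ : ∀ r, σ (σ r) = r)
    (N : Submodule R M) : Submodule R M where
  carrier := σM '' N
  add_mem' := by rintro _ _ ⟨a, ha, rfl⟩ ⟨b, hb, rfl⟩
                 exact ⟨a + b, N.add_mem ha hb, map_add _ _ _⟩
  zero_mem' := ⟨0, N.zero_mem, map_zero _⟩
  smul_mem' := by
    rintro r _ ⟨a, ha, rfl⟩
    exact ⟨σ r • a, N.smul_mem _ ha, by rw [hc, hσ]⟩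

theorem mem_mapSub {σ : R ≃ₐ[k] R} {σM : M ≃+ M}
    {hc : ∀ (r : R) (x : M), σM (r • x) = σ r • σM x} {hσ : ∀ r, σ (σ r) = r}
    (hi : ∀ x, σM (σM x) = x) {N : Submodule R M} {x : M} :
    x ∈ mapSub σ σM hc hσ N ↔ σM x ∈ N := by
  constructor
  · rintro ⟨a, ha, rfl⟩; rwa [hi]
  · intro h; exact ⟨σM x, h, hi x⟩

end Aux

/-- Let `R` be a `ℤ/2`-graded noetherian algebra over a field of characteristic ≠ 2, with
parity automorphism `σ` (graded objects are the `σ`-stable ones).  A two-sided graded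
ideal `p` of `R` is graded-primitive (the annihilator of a graded-simple left `R`-module)
if and only if there exists a left primitive ideal `P` of `R` (the annihilator of a simple
left `R`-module) with `p = P ∩ σ(P)`. -/
theorem stmt_12 {k R : Type} [Field k] (hchar : (2 : k) ≠ 0)
    [Ring R] [Algebra k R] [IsNoetherianRing R]
    (σ : R ≃ₐ[k] R) (hσ : ∀ r : R, σ (σ r) = r)
    (p : Ideal R) (hp2 : ∀ a ∈ p, ∀ r : R, a * r ∈ p) (hpσ : ∀ a ∈ p, σ a ∈ p) :
    ((∃ (M : Type) (_ : AddCommGroup M) (_ : Module R M) (σM : M ≃+ M),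
        (∀ (r : R) (x : M), σM (r • x) = σ r • σM x) ∧ (∀ x : M, σM (σM x) = x) ∧
        Nontrivial M ∧
        (∀ N : Submodule R M, N ≠ ⊥ → (∀ x ∈ N, σM x ∈ N) → N = ⊤) ∧
        Module.annihilator R M = p) ↔
      (∃ P : Ideal R,
        (∃ (L : Type) (_ : AddCommGroup L) (_ : Module R L),
          IsSimpleModule R L ∧ Module.annihilator R L = P) ∧
        ∀ x : R, x ∈ p ↔ (x ∈ P ∧ σ x ∈ P))) := by
  constructor
  · rintro ⟨M, _, _, σM, hc, hi, hnt, hgr, hann⟩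
    -- M is finitely generated, hence noetherian
    obtain ⟨x, hx⟩ := exists_ne (0 : M)
    set K : Submodule R M := Submodule.span R {x} ⊔ Submodule.span R {σM x} with hK
    have hKstab : ∀ z ∈ K, σM z ∈ K := by
      intro z hz
      rw [hK, Submodule.mem_sup] at hz
      obtain ⟨a, ha, b, hb, rfl⟩ := hz
      rw [Submodule.mem_span_singleton] at ha hb
      obtain ⟨r, rfl⟩ := ha; obtain ⟨s, rfl⟩ := hb
      rw [map_add, hc, hc, hi]
      exact Submodule.add_mem _
        (Submodule.mem_sup_right (Submodule.smul_mem _ _ (Submodule.mem_span_singleton_self _)))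
        (Submodule.mem_sup_left (Submodule.smul_mem _ _ (Submodule.mem_span_singleton_self _)))
    have hKne : K ≠ ⊥ := by
      intro h
      apply hx
      have hxK : x ∈ K := Submodule.mem_sup_left (Submodule.mem_span_singleton_self _)
      rw [h, Submodule.mem_bot] at hxK
      exact hxK
    have hKtop : K = ⊤ := hgr K hKne hKstab
    have hfg : (⊤ : Submodule R M).FG := by
      rw [← hKtop, hK]
      exact Submodule.FG.sup (Submodule.fg_span_singleton x) (Submodule.fg_span_singleton (σM x))
    haveI : Module.Finite R M := Module.finite_def.mpr hfg
    have hnoeth : IsNoetherian R M := isNoetherian_of_isNoetherianRing_of_finite R M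
    -- find a maximal submodule
    obtain ⟨N0, hN0mem, hN0max⟩ := (set_has_maximal_iff_noetherian.mpr hnoeth)
      {N : Submodule R M | N ≠ ⊤} ⟨⊥, by
        intro h
        obtain ⟨y, hy⟩ := exists_ne (0 : M)
        exact hy ((Submodule.mem_bot R).mp (h ▸ Submodule.mem_top))⟩
    have hN0coatom : IsCoatom N0 := by
      refine ⟨hN0mem, fun b hb => ?_⟩
      by_contra hbt
      exact hN0max b hbt hb
    have hsimple : IsSimpleModule R (M ⧸ N0) := isSimpleModule_iff_isCoatom.mpr hN0coatom
    refine ⟨Module.annihilator R (M ⧸ N0),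
      ⟨M ⧸ N0, inferInstance, inferInstance, hsimple, rfl⟩, fun r => ?_⟩
    constructor
    · intro hr
      have hrM : ∀ m : M, r • m = 0 := fun m =>
        Module.mem_annihilator.mp (hann ▸ hr : r ∈ Module.annihilator R M) m
      have hσrM : ∀ m : M, σ r • m = 0 := fun m =>
        Module.mem_annihilator.mp (hann ▸ hpσ r hr : σ r ∈ Module.annihilator R M) m
      constructor <;> rw [Module.mem_annihilator] <;> intro m <;>
        obtain ⟨m, rfl⟩ := Submodule.Quotient.mk_surjective N0 m
      · rw [← Submodule.Quotient.mk_smul, hrM, Submodule.Quotient.mk_zero]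
      · rw [← Submodule.Quotient.mk_smul, hσrM, Submodule.Quotient.mk_zero]
    · rintro ⟨h1, h2⟩
      have h1' : ∀ m : M, r • m ∈ N0 := by
        intro m
        have := Module.mem_annihilator.mp h1 (Submodule.Quotient.mk m)
        rwa [← Submodule.Quotient.mk_smul, Submodule.Quotient.mk_eq_zero] at this
      have h2' : ∀ m : M, σ r • m ∈ N0 := by
        intro m
        have := Module.mem_annihilator.mp h2 (Submodule.Quotient.mk m)
        rwa [← Submodule.Quotient.mk_smul, Submodule.Quotient.mk_eq_zero] at this
      set N1 : Submodule R M := N0 ⊓ mapSub σ σM hc hσ N0 with hN1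
      have hN1stab : ∀ z ∈ N1, σM z ∈ N1 := by
        rintro z ⟨hz0, hz1⟩
        exact ⟨(mem_mapSub hi).mp hz1, (mem_mapSub hi).mpr (by rwa [hi])⟩
      have hN1bot : N1 = ⊥ := by
        by_contra hne
        have := hgr N1 hne hN1stab
        exact hN0mem (top_le_iff.mp (this ▸ inf_le_left))
      rw [← hann, Module.mem_annihilator]
      intro m
      have hm1 : r • m ∈ N0 := h1' m
      have hm2 : r • m ∈ mapSub σ σM hc hσ N0 := by
        rw [mem_mapSub hi, hc]
        exact h2' (σM m)
      have : r • m ∈ N1 := ⟨hm1, hm2⟩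
      rwa [hN1bot, Submodule.mem_bot] at this
  · rintro ⟨P, ⟨L, _, _, hLs, hLann⟩, hpP⟩
    haveI := hLs
    haveI : Nontrivial L := IsSimpleModule.nontrivial R L
    set σ' : R →+* R := (σ : R →+* R) with hσ'def
    have hσ'σ : ∀ r : R, σ' r = σ r := fun _ => rfl
    have hPmem : ∀ r : R, r ∈ P ↔ ∀ l : L, r • l = 0 := fun r => by
      rw [← hLann, Module.mem_annihilator]
    let τ : (L × Twisted σ' L) ≃+ (L × Twisted σ' L) :=
      { toFun := fun z => (untw σ' z.2, totw σ' z.1)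
        invFun := fun z => (untw σ' z.2, totw σ' z.1)
        left_inv := fun z => rfl
        right_inv := fun z => rfl
        map_add' := fun a b => rfl }
    have hτc : ∀ (r : R) (z : L × Twisted σ' L), τ (r • z) = σ r • τ z := by
      intro r z
      have h2 : (σ r • τ z).2 = totw σ' (σ (σ r) • z.1) := rfl
      refine Prod.ext rfl ?_
      rw [h2, hσ]
      rfl
    have hτi : ∀ z : L × Twisted σ' L, τ (τ z) = z := fun z => rfl
    by_cases hall : ∀ N : Submodule R (L × Twisted σ' L), N ≠ ⊥ →
        (∀ z ∈ N, τ z ∈ N) → N = ⊤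
    · -- the product module is graded-simple
      refine ⟨L × Twisted σ' L, inferInstance, inferInstance, τ, hτc, hτi, ?_, hall, ?_⟩
      · obtain ⟨a, b, hab⟩ := exists_pair_ne L
        exact ⟨(a, totw σ' 0), (b, totw σ' 0), fun h => hab (congrArg Prod.fst h)⟩
      · ext r
        rw [Module.mem_annihilator, hpP r, hPmem, hPmem]
        constructor
        · intro h
          constructor
          · intro l
            exact congrArg Prod.fst (h (l, totw σ' 0))
          · intro l
            have h1 := congrArg Prod.snd (h ((0 : L), totw σ' l))
            have h2 : untw σ' (r • totw σ' l) = σ r • l := rfl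
            rw [← h2]
            exact congrArg (untw σ') h1
        · rintro ⟨h1, h2⟩ z
          refine Prod.ext (h1 z.1) ?_
          show totw σ' (σ' r • untw σ' z.2) = 0
          rw [hσ'σ, h2 (untw σ' z.2)]
          rfl
    · -- there is a proper stable submodule: it is the graph of an involution of L
      push_neg at hall
      obtain ⟨N, hNbot, hNstab, hNtop⟩ := hall
      set S : Submodule R L := N.comap (LinearMap.inl R L (Twisted σ' L)) with hSdef
      have hSmem : ∀ l : L, l ∈ S ↔ ((l, (0 : Twisted σ' L)) : L × Twisted σ' L) ∈ N := by
        intro l; rfl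
      have hSbot : S = ⊥ := by
        rcases eq_bot_or_eq_top S with h | h
        · exact h
        · exfalso
          apply hNtop
          rw [Submodule.eq_top_iff']
          intro z
          have ha : ((z.1, (0 : Twisted σ' L)) : L × Twisted σ' L) ∈ N := by
            rw [← hSmem]; rw [h]; trivial
          have hb : ((untw σ' z.2, (0 : Twisted σ' L)) : L × Twisted σ' L) ∈ N := by
            rw [← hSmem]; rw [h]; trivial
          have hc' := hNstab _ hb
          have hd : τ (untw σ' z.2, (0 : Twisted σ' L)) = ((0 : L), z.2) := rfl
          rw [hd] at hc'
          have := N.add_mem ha hc'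
          simpa using this
      have hT0 : ∀ y : Twisted σ' L, (((0 : L), y) : L × Twisted σ' L) ∈ N → y = 0 := by
        intro y hy
        have := hNstab _ hy
        have hd : τ ((0 : L), y) = (untw σ' y, (0 : Twisted σ' L)) := rfl
        rw [hd, ← hSmem] at this
        rw [hSbot, Submodule.mem_bot] at this
        show untw σ' y = 0
        exact this
      have hex : ∀ l : L, ∃ y : Twisted σ' L, ((l, y) : L × Twisted σ' L) ∈ N := by
        have hpi : N.map (LinearMap.fst R L (Twisted σ' L)) = ⊤ := by
          rcases eq_bot_or_eq_top (N.map (LinearMap.fst R L (Twisted σ' L))) with h | h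
          · exfalso
            obtain ⟨z, hzN, hz0⟩ := Submodule.ne_bot_iff N |>.mp hNbot
            have : z.1 ∈ N.map (LinearMap.fst R L (Twisted σ' L)) :=
              ⟨z, hzN, rfl⟩
            rw [h, Submodule.mem_bot] at this
            apply hz0
            have hz12 : z = (z.1, z.2) := rfl
            have h2 : z.2 = 0 := hT0 z.2 (by rw [hz12, this] at hzN; exact hzN)
            rw [hz12, this, h2]
            rfl
          · exact h
        intro l
        have : l ∈ N.map (LinearMap.fst R L (Twisted σ' L)) := by rw [hpi]; trivial
        obtain ⟨z, hzN, hz⟩ := this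
        exact ⟨z.2, by rwa [show ((l, z.2) : L × Twisted σ' L) = z from by
          rw [← hz]; rfl]⟩
      have huniq : ∀ (l : L) (y y' : Twisted σ' L),
          ((l, y) : L × Twisted σ' L) ∈ N → ((l, y') : L × Twisted σ' L) ∈ N → y = y' := by
        intro l y y' h h'
        have hsub := N.sub_mem h h'
        have he : ((l, y) : L × Twisted σ' L) - (l, y') = ((0 : L), y - y') := by
          rw [Prod.mk_sub_mk, sub_self]
        rw [he] at hsub
        have := hT0 _ hsub
        exact sub_eq_zero.mp this
      choose φ hφ using hex
      have hφ0 : φ 0 = 0 := huniq 0 (φ 0) 0 (hφ 0) N.zero_mem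
      have hφadd : ∀ a b : L, φ (a + b) = φ a + φ b := by
        intro a b
        refine huniq (a + b) _ _ (hφ (a + b)) ?_
        have := N.add_mem (hφ a) (hφ b)
        simpa using this
      have hφsmul : ∀ (r : R) (a : L), φ (r • a) = r • φ a := by
        intro r a
        refine huniq (r • a) _ _ (hφ (r • a)) ?_
        have := N.smul_mem r (hφ a)
        rwa [show r • ((a, φ a) : L × Twisted σ' L) = (r • a, r • φ a) from rfl] at this
      have hφinv : ∀ a : L, φ (untw σ' (φ a)) = totw σ' a := by
        intro a
        have := hNstab _ (hφ a)
        have hd : τ (a, φ a) = (untw σ' (φ a), totw σ' a) := rfl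
        rw [hd] at this
        exact huniq _ _ _ (hφ (untw σ' (φ a))) this
      set ψ : L → L := fun l => untw σ' (φ l) with hψdef
      have hψinv : ∀ a : L, ψ (ψ a) = a := by
        intro a
        show untw σ' (φ (untw σ' (φ a))) = a
        rw [hφinv]
        rfl
      have hψadd : ∀ a b : L, ψ (a + b) = ψ a + ψ b := by
        intro a b
        show untw σ' (φ (a + b)) = untw σ' (φ a) + untw σ' (φ b)
        rw [hφadd]
        rfl
      have hψsmul : ∀ (r : R) (a : L), ψ (r • a) = σ r • ψ a := by
        intro r a
        show untw σ' (φ (r • a)) = σ r • untw σ' (φ a)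
        rw [hφsmul]
        rfl
      have hψ0 : ψ 0 = 0 := by
        show untw σ' (φ 0) = 0
        rw [hφ0]
        rfl
      refine ⟨L, inferInstance, inferInstance,
        { toFun := ψ, invFun := ψ, left_inv := hψinv, right_inv := hψinv,
          map_add' := hψadd }, hψsmul, hψinv, ‹Nontrivial L›, ?_, ?_⟩
      · intro N' hN' _
        rcases eq_bot_or_eq_top N' with h | h
        · exact absurd h hN'
        · exact h
      · have key : ∀ s : R, s ∈ P → σ s ∈ P := by
          intro s hs
          rw [hPmem] at hs ⊢
          intro l
          have h1 : ψ (s • ψ l) = σ s • ψ (ψ l) := hψsmul s (ψ l)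
          rw [hs (ψ l), hψ0, hψinv] at h1
          exact h1.symm
        rw [hLann]
        ext r
        rw [hpP r]
        exact ⟨fun h => ⟨h, key r h⟩, fun h => h.1⟩
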